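/- Sandwich characterization and stopping rule at an optimum (Corollary): let U be admissible with derivative U', and let (c, g) be a feasible portfolio with c > 0 that maximizes Φ over all feasible portfolios. Fix an event ℓ and let A ℓ = {i : g ℓ i > 0} be its active set, with P_{ℓ,A} = ∑_{i ∈ A ℓ} p ℓ i and Q_{ℓ,A} = ∑_{i ∈ A ℓ} π ℓ i. If A ℓ is a proper subset of the outcomes of event ℓ, then Q_{ℓ,A} < 1, every active outcome i ∈ A ℓ satisfies p ℓ i / π ℓ i > (1 − P_{ℓ,A}) / (1 − Q_{ℓ,A}), and every inactive outcome j ∉ A ℓ satisfies p ℓ j / π ℓ j ≤ (1 − P_{ℓ,A}) / (1 − Q_{ℓ,A}). -/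

import Mathlib

open Finset

/-- Probability of a product state `x`. -/
def prodProb {m : ℕ} {n : Fin m → ℕ} (p : ∀ ℓ, Fin (n ℓ) → ℝ)
    (x : ∀ ℓ, Fin (n ℓ)) : ℝ :=
  ∏ ℓ, p ℓ (x ℓ)

/-- Terminal wealth of the portfolio `(c, g)` in product state `x`. -/
def wealth {m : ℕ} {n : Fin m → ℕ} (c : ℝ) (g : ∀ ℓ, Fin (n ℓ) → ℝ)
    (x : ∀ ℓ, Fin (n ℓ)) : ℝ :=
  c + ∑ ℓ, g ℓ (x ℓ)

/-- Probability of a reduced state `y` (a state of all events other than `ℓ`). -/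
def redProb {m : ℕ} {n : Fin m → ℕ} (p : ∀ ℓ, Fin (n ℓ) → ℝ) (ℓ : Fin m)
    (y : ∀ r : {r : Fin m // r ≠ ℓ}, Fin (n r.1)) : ℝ :=
  ∏ r, p r.1 (y r)

/-- Background wealth `R_ℓ(y)` from all events other than `ℓ`. -/
def background {m : ℕ} {n : Fin m → ℕ} (c : ℝ) (g : ∀ ℓ, Fin (n ℓ) → ℝ) (ℓ : Fin m)
    (y : ∀ r : {r : Fin m // r ≠ ℓ}, Fin (n r.1)) : ℝ :=
  c + ∑ r, g r.1 (y r)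

/-- Reduced expectation `E₋ℓ[h]` over reduced states of event `ℓ`. -/
def Eminus {m : ℕ} {n : Fin m → ℕ} (p : ∀ ℓ, Fin (n ℓ) → ℝ) (ℓ : Fin m)
    (h : (∀ r : {r : Fin m // r ≠ ℓ}, Fin (n r.1)) → ℝ) : ℝ :=
  ∑ y, redProb p ℓ y * h y

/-- Feasibility: nonnegative cash and wagers, unit budget, positive wealth in every state. -/
def Feasible {m : ℕ} {n : Fin m → ℕ} (π : ∀ ℓ, Fin (n ℓ) → ℝ)
    (c : ℝ) (g : ∀ ℓ, Fin (n ℓ) → ℝ) : Prop :=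
  0 ≤ c ∧ (∀ ℓ i, 0 ≤ g ℓ i) ∧ (c + ∑ ℓ, ∑ i, π ℓ i * g ℓ i = 1) ∧
    ∀ x, 0 < wealth c g x

/-- The wagers `g` are supported on the support family `A`. -/
def SupportedOn {m : ℕ} {n : Fin m → ℕ} (A : ∀ ℓ, Finset (Fin (n ℓ)))
    (g : ∀ ℓ, Fin (n ℓ) → ℝ) : Prop :=
  ∀ ℓ i, (i ∈ A ℓ → 0 < g ℓ i) ∧ (i ∉ A ℓ → g ℓ i = 0)

/-- `U` is an admissible utility with derivative `U'`. -/
def Admissible (U U' : ℝ → ℝ) : Prop :=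
  (∀ w : ℝ, 0 < w → HasDerivAt U (U' w) w) ∧ (∀ w : ℝ, 0 < w → 0 < U' w) ∧
    StrictAntiOn U' (Set.Ioi 0)

private lemma slope_nonpos' {φ : ℝ → ℝ} {d ε : ℝ} (hε : 0 < ε)
    (hd : HasDerivAt φ d 0) (h : ∀ t : ℝ, 0 ≤ t → t < ε → φ t ≤ φ 0) : d ≤ 0 := by
  have hs := hasDerivAt_iff_tendsto_slope.mp hd
  have hs' : Filter.Tendsto (slope φ 0) (nhdsWithin 0 (Set.Ioi 0)) (nhds d) :=
    hs.mono_left (nhdsWithin_mono 0 (fun t ht => ne_of_gt ht))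
  refine le_of_tendsto hs' ?_
  filter_upwards [Ioo_mem_nhdsGT_of_mem ⟨le_refl (0:ℝ), hε⟩] with t ht
  have h1 : φ t - φ 0 ≤ 0 := sub_nonpos.mpr (h t ht.1.le ht.2)
  simp only [slope_def_field, div_eq_mul_inv]
  exact mul_nonpos_of_nonpos_of_nonneg h1 (inv_nonneg.mpr (by linarith [ht.1]))

private lemma slope_nonneg' {φ : ℝ → ℝ} {d ε : ℝ} (hε : 0 < ε)
    (hd : HasDerivAt φ d 0) (h : ∀ t : ℝ, -ε < t → t ≤ 0 → φ t ≤ φ 0) : 0 ≤ d := by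
  have hs := hasDerivAt_iff_tendsto_slope.mp hd
  have hs' : Filter.Tendsto (slope φ 0) (nhdsWithin 0 (Set.Iio 0)) (nhds d) :=
    hs.mono_left (nhdsWithin_mono 0 (fun t ht => ne_of_lt ht))
  refine ge_of_tendsto hs' ?_
  filter_upwards [Ioo_mem_nhdsLT_of_mem ⟨neg_lt_zero.mpr hε, le_refl (0:ℝ)⟩] with t ht
  have h1 : φ t - φ 0 ≤ 0 := sub_nonpos.mpr (h t ht.1 ht.2.le)
  have h2 : (t - 0)⁻¹ ≤ 0 := inv_nonpos.mpr (by linarith [ht.2])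
  simp only [slope_def_field, div_eq_mul_inv]
  exact mul_nonneg_of_nonpos_of_nonpos h1 h2

/-- sandwich characterization and stopping rule at an optimum: if the
active set `A ℓ = {i : g ℓ i > 0}` of event `ℓ` is proper, then `Q_{ℓ,A} < 1`, every
active edge ratio strictly exceeds `(1-P)/(1-Q)`, and every inactive one is `≤` it. -/
theorem sandwich_characterization {m : ℕ} (n : Fin m → ℕ)
    (p π : ∀ ℓ, Fin (n ℓ) → ℝ) (hm : 1 ≤ m)
    (hp : ∀ ℓ i, 0 < p ℓ i) (hpsum : ∀ ℓ, ∑ i, p ℓ i = 1)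
    (hπ : ∀ ℓ i, 0 < π ℓ i)
    (U U' : ℝ → ℝ) (hU : Admissible U U')
    (c : ℝ) (g : ∀ ℓ, Fin (n ℓ) → ℝ)
    (hfeas : Feasible π c g) (hc : 0 < c)
    (hopt : ∀ c' : ℝ, ∀ g' : ∀ ℓ, Fin (n ℓ) → ℝ, Feasible π c' g' →
      ∑ x, prodProb p x * U (wealth c' g' x) ≤ ∑ x, prodProb p x * U (wealth c g x))
    (ℓ : Fin m)
    (hproper : Finset.univ.filter (fun i => 0 < g ℓ i) ≠ (Finset.univ : Finset (Fin (n ℓ)))) :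
    (∑ i ∈ Finset.univ.filter (fun i => 0 < g ℓ i), π ℓ i) < 1
    ∧ (∀ i ∈ Finset.univ.filter (fun i => 0 < g ℓ i),
        (1 - ∑ i ∈ Finset.univ.filter (fun i => 0 < g ℓ i), p ℓ i)
            / (1 - ∑ i ∈ Finset.univ.filter (fun i => 0 < g ℓ i), π ℓ i)
          < p ℓ i / π ℓ i)
    ∧ (∀ j : Fin (n ℓ), j ∉ Finset.univ.filter (fun i => 0 < g ℓ i) →
        p ℓ j / π ℓ j
          ≤ (1 - ∑ i ∈ Finset.univ.filter (fun i => 0 < g ℓ i), p ℓ i)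
            / (1 - ∑ i ∈ Finset.univ.filter (fun i => 0 < g ℓ i), π ℓ i)) := by
  classical
  obtain ⟨hUd, hU'pos, hU'anti⟩ := hU
  obtain ⟨hc0, hg0, hbudget, hW⟩ := hfeas
  -- every event has at least one outcome
  have hn : ∀ ℓ', Nonempty (Fin (n ℓ')) := by
    intro ℓ'
    rcases Nat.eq_zero_or_pos (n ℓ') with h | h
    · exfalso
      have h0 : (∑ i, p ℓ' i) = 0 :=
        Finset.sum_eq_zero fun i _ => absurd i.isLt (by omega)
      rw [hpsum ℓ'] at h0; norm_num at h0
    · exact ⟨⟨0, h⟩⟩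
  haveI hX : Nonempty (∀ ℓ', Fin (n ℓ')) := ⟨fun ℓ' => (hn ℓ').some⟩
  have hPr : ∀ x : (∀ ℓ', Fin (n ℓ')), 0 < prodProb p x :=
    fun x => Finset.prod_pos fun ℓ' _ => hp ℓ' (x ℓ')
  set lam := ∑ x, prodProb p x * U' (wealth c g x) with hlam_def
  have hlam_pos : 0 < lam :=
    Finset.sum_pos (fun x _ => mul_pos (hPr x) (hU'pos _ (hW x))) univ_nonempty
  set G : Fin (n ℓ) → ℝ :=
    fun k => ∑ x ∈ univ.filter (fun x => x ℓ = k), prodProb p x * U' (wealth c g x)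
    with hG_def
  have hGval : ∀ k : Fin (n ℓ), G k
      = ∑ x ∈ univ.filter (fun x => x ℓ = k), prodProb p x * U' (wealth c g x) :=
    fun k => rfl
  have hGsum : ∑ k, G k = lam :=
    Finset.sum_fiberwise univ (fun x => x ℓ) (fun x => prodProb p x * U' (wealth c g x))
  -- update lemmas
  have hup_wealth : ∀ (x : ∀ ℓ', Fin (n ℓ')) (k : Fin (n ℓ)),
      wealth c g (Function.update x ℓ k) = wealth c g x - g ℓ (x ℓ) + g ℓ k := by
    intro x k
    unfold wealth
    have h1 : ∀ z : ∀ ℓ', Fin (n ℓ'), ∑ ℓ', g ℓ' (z ℓ')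
        = g ℓ (z ℓ) + ∑ ℓ' ∈ univ.erase ℓ, g ℓ' (z ℓ') :=
      fun z => (Finset.add_sum_erase univ (fun ℓ' => g ℓ' (z ℓ')) (mem_univ ℓ)).symm
    rw [h1, h1 x]
    have h2 : ∑ ℓ' ∈ univ.erase ℓ, g ℓ' (Function.update x ℓ k ℓ')
        = ∑ ℓ' ∈ univ.erase ℓ, g ℓ' (x ℓ') :=
      Finset.sum_congr rfl fun ℓ' h => by rw [Function.update_of_ne (mem_erase.mp h).1]
    rw [h2, Function.update_self]
    ring
  have hup_prod : ∀ (x : ∀ ℓ', Fin (n ℓ')) (k : Fin (n ℓ)),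
      prodProb p (Function.update x ℓ k) * p ℓ (x ℓ) = prodProb p x * p ℓ k := by
    intro x k
    unfold prodProb
    rw [← Finset.mul_prod_erase univ (fun ℓ' => p ℓ' (Function.update x ℓ k ℓ')) (mem_univ ℓ),
      ← Finset.mul_prod_erase univ (fun ℓ' => p ℓ' (x ℓ')) (mem_univ ℓ)]
    have h2 : ∏ ℓ' ∈ univ.erase ℓ, p ℓ' (Function.update x ℓ k ℓ')
        = ∏ ℓ' ∈ univ.erase ℓ, p ℓ' (x ℓ') :=
      Finset.prod_congr rfl fun ℓ' h => by rw [Function.update_of_ne (mem_erase.mp h).1]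
    rw [h2, Function.update_self]
    ring
  -- fiber transport
  have hfiber : ∀ j k : Fin (n ℓ),
      G k = ∑ x ∈ univ.filter (fun x => x ℓ = j),
        (p ℓ k / p ℓ j) * (prodProb p x * U' (wealth c g x - g ℓ j + g ℓ k)) := by
    intro j k
    rw [hGval k]
    refine Finset.sum_nbij' (fun x => Function.update x ℓ j)
      (fun x => Function.update x ℓ k) ?_ ?_ ?_ ?_ ?_
    · intro x _; simp [Function.update_self]
    · intro x _; simp [Function.update_self]
    · intro x hx
      have hx' : x ℓ = k := by simpa using hx
      show Function.update (Function.update x ℓ j) ℓ k = x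
      rw [Function.update_idem, ← hx', Function.update_eq_self]
    · intro x hx
      have hx' : x ℓ = j := by simpa using hx
      show Function.update (Function.update x ℓ k) ℓ j = x
      rw [Function.update_idem, ← hx', Function.update_eq_self]
    · intro x hx
      have hx' : x ℓ = k := by simpa using hx
      have hw : wealth c g (Function.update x ℓ j) - g ℓ j + g ℓ k = wealth c g x := by
        rw [hup_wealth x j, hx']; ring
      have hpr : prodProb p (Function.update x ℓ j) = prodProb p x * p ℓ j / p ℓ k := by
        have h := hup_prod x j
        rw [hx'] at h
        rw [eq_div_iff (hp ℓ k).ne']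
        exact h
      rw [hw, hpr]
      field_simp [(hp ℓ k).ne', (hp ℓ j).ne']
  -- a fixed inactive outcome
  obtain ⟨j0, -, hj0A⟩ :=
    Finset.exists_of_ssubset ((Finset.subset_univ _).ssubset_of_ne hproper)
  have hj0A' : ¬ 0 < g ℓ j0 := by simpa using hj0A
  have hgj0 : g ℓ j0 = 0 := le_antisymm (not_lt.mp hj0A') (hg0 ℓ j0)
  have hfib_ne : (univ.filter (fun x : (∀ ℓ', Fin (n ℓ')) => x ℓ = j0)).Nonempty :=
    ⟨Function.update (Classical.arbitrary _) ℓ j0, by simp [Function.update_self]⟩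
  have hGj0_pos : 0 < G j0 := by
    rw [hGval j0]
    exact Finset.sum_pos (fun x _ => mul_pos (hPr x) (hU'pos _ (hW x))) hfib_ne
  have hpj0 : 0 < p ℓ j0 := hp ℓ j0
  set F0 : ℝ := G j0 / p ℓ j0 with hF0_def
  have hF0_pos : 0 < F0 := div_pos hGj0_pos hpj0
  -- inactive outcomes: exact proportionality
  have hinactive : ∀ j : Fin (n ℓ), g ℓ j = 0 → G j = p ℓ j * F0 := by
    intro j hgj
    rw [hfiber j0 j]
    have : ∀ x ∈ univ.filter (fun x : (∀ ℓ', Fin (n ℓ')) => x ℓ = j0),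
        (p ℓ j / p ℓ j0) * (prodProb p x * U' (wealth c g x - g ℓ j0 + g ℓ j))
        = (p ℓ j / p ℓ j0) * (prodProb p x * U' (wealth c g x)) := by
      intro x _; rw [hgj0, hgj]; ring_nf
    rw [Finset.sum_congr rfl this, ← Finset.mul_sum, ← hGval j0]
    rw [hF0_def]
    field_simp
  -- active outcomes: strict inequality
  have hactive : ∀ i : Fin (n ℓ), 0 < g ℓ i → G i < p ℓ i * F0 := by
    intro i hgi
    rw [hfiber j0 i]
    have hlt : ∑ x ∈ univ.filter (fun x : (∀ ℓ', Fin (n ℓ')) => x ℓ = j0),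
        (p ℓ i / p ℓ j0) * (prodProb p x * U' (wealth c g x - g ℓ j0 + g ℓ i))
        < ∑ x ∈ univ.filter (fun x : (∀ ℓ', Fin (n ℓ')) => x ℓ = j0),
        (p ℓ i / p ℓ j0) * (prodProb p x * U' (wealth c g x)) := by
      refine Finset.sum_lt_sum_of_nonempty hfib_ne ?_
      intro x _
      have hU'lt : U' (wealth c g x - g ℓ j0 + g ℓ i) < U' (wealth c g x) := by
        rw [hgj0, sub_zero]
        exact hU'anti (Set.mem_Ioi.mpr (hW x))
          (Set.mem_Ioi.mpr (by linarith [hW x])) (by linarith [hW x])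
      have hco : 0 < (p ℓ i / p ℓ j0) * prodProb p x :=
        mul_pos (div_pos (hp ℓ i) hpj0) (hPr x)
      calc (p ℓ i / p ℓ j0) * (prodProb p x * U' (wealth c g x - g ℓ j0 + g ℓ i))
          = ((p ℓ i / p ℓ j0) * prodProb p x) * U' (wealth c g x - g ℓ j0 + g ℓ i) := by ring
        _ < ((p ℓ i / p ℓ j0) * prodProb p x) * U' (wealth c g x) :=
            mul_lt_mul_of_pos_left hU'lt hco
        _ = (p ℓ i / p ℓ j0) * (prodProb p x * U' (wealth c g x)) := by ring
    have heq : ∑ x ∈ univ.filter (fun x : (∀ ℓ', Fin (n ℓ')) => x ℓ = j0),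
        (p ℓ i / p ℓ j0) * (prodProb p x * U' (wealth c g x)) = p ℓ i * F0 := by
      rw [← Finset.mul_sum, ← hGval j0, hF0_def]
      field_simp
    linarith [hlt, heq.symm.le, heq]
  -- KKT conditions
  have hKKT : ∀ k : Fin (n ℓ), G k ≤ lam * π ℓ k ∧ (0 < g ℓ k → G k = lam * π ℓ k) := by
    intro k
    set a : (∀ ℓ', Fin (n ℓ')) → ℝ := fun x => (if x ℓ = k then (1:ℝ) else 0) - π ℓ k
      with ha_def
    set gt : ℝ → ∀ ℓ', Fin (n ℓ') → ℝ :=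
      fun t => Function.update g ℓ (fun i => g ℓ i + t * (if i = k then 1 else 0))
      with hgt_def
    have hWt : ∀ (t : ℝ) x, wealth (c - t * π ℓ k) (gt t) x = wealth c g x + t * a x := by
      intro t x
      unfold wealth
      have h1 : ∀ (h : ∀ ℓ', Fin (n ℓ') → ℝ), ∑ ℓ', h ℓ' (x ℓ')
          = h ℓ (x ℓ) + ∑ ℓ' ∈ univ.erase ℓ, h ℓ' (x ℓ') :=
        fun h => (Finset.add_sum_erase univ (fun ℓ' => h ℓ' (x ℓ')) (mem_univ ℓ)).symm
      rw [h1 (gt t), h1 g]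
      have h2 : ∑ ℓ' ∈ univ.erase ℓ, gt t ℓ' (x ℓ') = ∑ ℓ' ∈ univ.erase ℓ, g ℓ' (x ℓ') :=
        Finset.sum_congr rfl fun ℓ' h => by
          rw [hgt_def]; simp only; rw [Function.update_of_ne (mem_erase.mp h).1]
      rw [h2, hgt_def]
      simp only [Function.update_self, ha_def]
      ring
    have hb : ∀ t : ℝ, (c - t * π ℓ k) + ∑ ℓ', ∑ i, π ℓ' i * gt t ℓ' i = 1 := by
      intro t
      have h1 : ∀ (h : ∀ ℓ', Fin (n ℓ') → ℝ), ∑ ℓ', ∑ i, π ℓ' i * h ℓ' i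
          = (∑ i, π ℓ i * h ℓ i) + ∑ ℓ' ∈ univ.erase ℓ, ∑ i, π ℓ' i * h ℓ' i :=
        fun h => (Finset.add_sum_erase univ (fun ℓ' => ∑ i, π ℓ' i * h ℓ' i) (mem_univ ℓ)).symm
      rw [h1 (gt t)]
      have h2 : ∑ ℓ' ∈ univ.erase ℓ, ∑ i, π ℓ' i * gt t ℓ' i
          = ∑ ℓ' ∈ univ.erase ℓ, ∑ i, π ℓ' i * g ℓ' i :=
        Finset.sum_congr rfl fun ℓ' h => by
          rw [hgt_def]; simp only; rw [Function.update_of_ne (mem_erase.mp h).1]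
      have h3 : ∑ i, π ℓ i * gt t ℓ i = (∑ i, π ℓ i * g ℓ i) + t * π ℓ k := by
        rw [hgt_def]
        simp only [Function.update_self]
        have h4 : ∀ i, π ℓ i * (g ℓ i + t * (if i = k then 1 else 0))
            = π ℓ i * g ℓ i + (if i = k then π ℓ k * t else 0) := by
          intro i; by_cases h : i = k <;> simp [h] <;> ring
        rw [Finset.sum_congr rfl (fun i _ => h4 i), Finset.sum_add_distrib,
          Finset.sum_ite_eq' univ k (fun i => π ℓ k * t)]
        simp; ring
      rw [h2, h3]
      have h5 := hbudget
      rw [h1 g] at h5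
      linarith
    obtain ⟨x₀, -, hx₀⟩ := Finset.exists_min_image univ (wealth c g) univ_nonempty
    have hδ : 0 < wealth c g x₀ := hW x₀
    set δ := wealth c g x₀ with hδ_def
    have haux : ∀ x, |a x| ≤ 1 + π ℓ k := by
      intro x
      have hb : a x = (if x ℓ = k then (1:ℝ) else 0) - π ℓ k := rfl
      rw [abs_le, hb]
      constructor <;> by_cases h : x ℓ = k <;> simp [h] <;> linarith [hπ ℓ k]
    set ε := min (c / π ℓ k) (δ / (1 + π ℓ k)) with hε_def
    have hε : 0 < ε :=
      lt_min (div_pos hc (hπ ℓ k)) (div_pos hδ (by linarith [hπ ℓ k]))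
    have hfeas_t : ∀ t : ℝ, |t| < ε → 0 ≤ g ℓ k + t →
        Feasible π (c - t * π ℓ k) (gt t) := by
      intro t ht hgk
      refine ⟨?_, ?_, hb t, ?_⟩
      · have h1 : |t| * π ℓ k < c := by
          have h2 : |t| < c / π ℓ k := lt_of_lt_of_le ht (min_le_left _ _)
          calc |t| * π ℓ k < (c / π ℓ k) * π ℓ k :=
              mul_lt_mul_of_pos_right h2 (hπ ℓ k)
            _ = c := div_mul_cancel₀ _ (ne_of_gt (hπ ℓ k))
        have h2 : t * π ℓ k ≤ |t| * π ℓ k :=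
          mul_le_mul_of_nonneg_right (le_abs_self t) (hπ ℓ k).le
        linarith
      · intro ℓ' i
        by_cases h : ℓ' = ℓ
        · subst h
          rw [hgt_def]; simp only [Function.update_self]
          by_cases h' : i = k
          · subst h'; simpa using hgk
          · simp [h']; exact hg0 ℓ' i
        · rw [hgt_def]; simp only; rw [Function.update_of_ne h]; exact hg0 ℓ' i
      · intro x
        rw [hWt]
        have h1 : |t * a x| ≤ |t| * (1 + π ℓ k) := by
          rw [abs_mul]
          exact mul_le_mul_of_nonneg_left (haux x) (abs_nonneg t)
        have h2 : |t| * (1 + π ℓ k) < δ := by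
          have h3 : |t| < δ / (1 + π ℓ k) := lt_of_lt_of_le ht (min_le_right _ _)
          have h4 : (0:ℝ) < 1 + π ℓ k := by linarith [hπ ℓ k]
          calc |t| * (1 + π ℓ k) < (δ / (1 + π ℓ k)) * (1 + π ℓ k) :=
              mul_lt_mul_of_pos_right h3 h4
            _ = δ := div_mul_cancel₀ _ (ne_of_gt h4)
        have h3 : δ ≤ wealth c g x := hx₀ x (mem_univ x)
        have h4 := neg_abs_le (t * a x)
        linarith
    have hder : HasDerivAt (fun t => ∑ x, prodProb p x * U (wealth c g x + t * a x))
        (∑ x, prodProb p x * (U' (wealth c g x) * a x)) 0 := by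
      apply HasDerivAt.fun_sum
      intro x _
      have h1 : HasDerivAt (fun t : ℝ => wealth c g x + t * a x) (a x) 0 := by
        simpa using (((hasDerivAt_id (0:ℝ)).mul_const (a x)).const_add (wealth c g x))
      have h2 : HasDerivAt U (U' (wealth c g x)) ((fun t : ℝ => wealth c g x + t * a x) 0) := by
        simpa using hUd _ (hW x)
      exact (h2.comp 0 h1).const_mul _
    have hopt_t : ∀ t : ℝ, |t| < ε → 0 ≤ g ℓ k + t →
        ∑ x, prodProb p x * U (wealth c g x + t * a x)
          ≤ ∑ x, prodProb p x * U (wealth c g x + 0 * a x) := by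
      intro t ht hgk
      have h1 := hopt (c - t * π ℓ k) (gt t) (hfeas_t t ht hgk)
      have h2 : ∑ x, prodProb p x * U (wealth c g x + t * a x)
          = ∑ x, prodProb p x * U (wealth (c - t * π ℓ k) (gt t) x) :=
        Finset.sum_congr rfl fun x _ => by rw [hWt]
      have h3 : ∑ x, prodProb p x * U (wealth c g x + 0 * a x)
          = ∑ x, prodProb p x * U (wealth c g x) :=
        Finset.sum_congr rfl fun x _ => by norm_num
      rw [h2, h3]
      exact h1
    have hd_le : (∑ x, prodProb p x * (U' (wealth c g x) * a x)) ≤ 0 := by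
      refine slope_nonpos' hε hder ?_
      intro t ht1 ht2
      exact hopt_t t (by rwa [abs_of_nonneg ht1]) (by linarith [hg0 ℓ k])
    have hd_eq : (∑ x, prodProb p x * (U' (wealth c g x) * a x)) = G k - lam * π ℓ k := by
      have h1 : ∀ x : (∀ ℓ', Fin (n ℓ')), prodProb p x * (U' (wealth c g x) * a x)
          = (if x ℓ = k then prodProb p x * U' (wealth c g x) else 0)
            - prodProb p x * U' (wealth c g x) * π ℓ k := by
        intro x
        rw [ha_def]
        by_cases h : x ℓ = k <;> simp [h] <;> ring
      rw [Finset.sum_congr rfl (fun x _ => h1 x), Finset.sum_sub_distrib]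
      congr 1
      · rw [hGval k, Finset.sum_filter]
      · rw [hlam_def, Finset.sum_mul]
        try exact Finset.sum_congr rfl fun x _ => by ring
    constructor
    · linarith [hd_le, hd_eq.symm.le, hd_eq.le]
    · intro hgk
      have hε' : 0 < min ε (g ℓ k) := lt_min hε hgk
      have hd_ge : 0 ≤ (∑ x, prodProb p x * (U' (wealth c g x) * a x)) := by
        refine slope_nonneg' hε' hder ?_
        intro t ht1 ht2
        have ht1' : -ε < t := lt_of_le_of_lt (by
          have := min_le_left ε (g ℓ k); linarith) ht1
        refine hopt_t t (by rw [abs_of_nonpos ht2]; linarith) ?_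
        have := min_le_right ε (g ℓ k)
        linarith
      linarith [hd_le, hd_ge, hd_eq]
  -- assemble
  set A := Finset.univ.filter (fun i => 0 < g ℓ i) with hA_def
  set P := ∑ i ∈ A, p ℓ i with hP_def
  set Q := ∑ i ∈ A, π ℓ i with hQ_def
  have hP_lt : P < 1 := by
    rw [hP_def, ← hpsum ℓ]
    exact Finset.sum_lt_sum_of_subset (Finset.subset_univ A) (mem_univ j0) hj0A
      (hp ℓ j0) (fun j _ _ => (hp ℓ j).le)
  have hsplitG : ∑ k ∈ A, G k + ∑ k ∈ univ.filter (fun k => ¬ 0 < g ℓ k), G k = lam := by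
    rw [hA_def, Finset.sum_filter_add_sum_filter_not, hGsum]
  have hsplitp : P + ∑ k ∈ univ.filter (fun k => ¬ 0 < g ℓ k), p ℓ k = 1 := by
    rw [hP_def, hA_def, Finset.sum_filter_add_sum_filter_not, hpsum ℓ]
  have hA_eq : ∑ k ∈ A, G k = lam * Q := by
    rw [hQ_def, Finset.mul_sum]
    refine Finset.sum_congr rfl fun k hk => ?_
    exact (hKKT k).2 (by rw [hA_def] at hk; simpa using hk)
  have hAc_eq : ∑ k ∈ univ.filter (fun k => ¬ 0 < g ℓ k), G k = (1 - P) * F0 := by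
    have h1 : ∀ k ∈ univ.filter (fun k : Fin (n ℓ) => ¬ 0 < g ℓ k), G k = p ℓ k * F0 := by
      intro k hk
      have hk' : ¬ 0 < g ℓ k := by simpa using hk
      exact hinactive k (le_antisymm (not_lt.mp hk') (hg0 ℓ k))
    rw [Finset.sum_congr rfl h1, ← Finset.sum_mul]
    have : ∑ k ∈ univ.filter (fun k : Fin (n ℓ) => ¬ 0 < g ℓ k), p ℓ k = 1 - P := by
      linarith [hsplitp]
    rw [this]
  have hkey : lam * (1 - Q) = (1 - P) * F0 := by
    have := hsplitG
    rw [hA_eq, hAc_eq] at this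
    linarith
  have hQ_lt : Q < 1 := by
    have h1 : 0 < (1 - P) * F0 := mul_pos (by linarith) hF0_pos
    nlinarith
  have hρ : (1 - P) / (1 - Q) = lam / F0 := by
    rw [div_eq_div_iff (by linarith : (0:ℝ) < 1 - Q).ne' hF0_pos.ne']
    linarith [hkey]
  refine ⟨hQ_lt, ?_, ?_⟩
  · intro i hi
    have hgi : 0 < g ℓ i := by rw [hA_def] at hi; simpa using hi
    have h1 : G i = lam * π ℓ i := (hKKT i).2 hgi
    have h2 : G i < p ℓ i * F0 := hactive i hgi
    rw [hρ, div_lt_div_iff₀ hF0_pos (hπ ℓ i)]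
    linarith
  · intro j hj
    have hgj : g ℓ j = 0 := by
      rw [hA_def] at hj
      exact le_antisymm (not_lt.mp (by simpa using hj)) (hg0 ℓ j)
    have h1 : G j = p ℓ j * F0 := hinactive j hgj
    have h2 : G j ≤ lam * π ℓ j := (hKKT j).1
    rw [hρ, div_le_div_iff₀ (hπ ℓ j) hF0_pos]
    linarith
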